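/- arXiv:0708.4234 — 3 statements merged into one kernel-verified Lean document; each statement's English description precedes it below -/
import Mathlib

section
/- The Hadamard product of two rational functions (power series with rational coefficients that are Taylor expansions of rational functions analytic at 0) is again the Taylor expansion of a rational function analytic at 0. -/
/-- Hadamard product of power series. -/
noncomputable def hadamard (f g : PowerSeries ℚ) : PowerSeries ℚ :=
  PowerSeries.mk fun n => (PowerSeries.coeff n f) * (PowerSeries.coeff n g)

/-- `f` is the Taylor expansion at 0 of a rational function analytic at 0. -/
def IsRationalPS (f : PowerSeries ℚ) : Prop :=
  ∃ p q : Polynomial ℚ, q.coeff 0 ≠ 0 ∧ (q : PowerSeries ℚ) * f = (p : PowerSeries ℚ)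

/-- `f` is algebraic over ℚ(z): a nonzero `Q(y,z)` satisfies `Q(f(z),z)=0`. -/
def IsAlgebraicPS (f : PowerSeries ℚ) : Prop :=
  ∃ Q : Polynomial (Polynomial ℚ), Q ≠ 0 ∧
    Polynomial.eval₂ Polynomial.coeToPowerSeries.ringHom f Q = 0

/-- `f` is holonomic: satisfies a nontrivial linear ODE with polynomial coefficients. -/
def IsHolonomicPS (f : PowerSeries ℚ) : Prop :=
  ∃ d : ℕ, ∃ c : Fin (d + 1) → Polynomial ℚ, (∃ j, c j ≠ 0) ∧
    ∑ j : Fin (d + 1), ((c j : PowerSeries ℚ) * (PowerSeries.derivativeFun)^[(j : ℕ)] f) = 0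
open Finset PowerSeries

/-- eventual linear recurrence with nonzero leading coefficient -/
def EvRec (a : ℕ → ℚ) : Prop :=
  ∃ (d N : ℕ) (c : ℕ → ℚ), c d ≠ 0 ∧
    ∀ n, N ≤ n → ∑ k ∈ Finset.range (d + 1), c k * a (n + k) = 0

lemma evRec_of_rational {f : PowerSeries ℚ} (hf : IsRationalPS f) :
    EvRec (fun n => PowerSeries.coeff n f) := by
  obtain ⟨p, q, hq0, hqf⟩ := hf
  refine ⟨q.natDegree, p.natDegree + 1, fun k => q.coeff (q.natDegree - k), by simpa using hq0, ?_⟩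
  intro n hn
  set d := q.natDegree with hd
  have h1 : (PowerSeries.coeff (n + d)) ((q : PowerSeries ℚ) * f) = 0 := by
    rw [hqf, Polynomial.coeff_coe]
    exact Polynomial.coeff_eq_zero_of_natDegree_lt (by omega)
  rw [PowerSeries.coeff_mul, Finset.Nat.sum_antidiagonal_eq_sum_range_succ_mk] at h1
  have h2 : ∑ i ∈ Finset.range (n + d + 1), q.coeff i * (PowerSeries.coeff (n + d - i) f) = 0 := by
    simpa [Polynomial.coeff_coe] using h1
  have h3 : ∑ i ∈ Finset.range (d + 1), q.coeff i * (PowerSeries.coeff (n + d - i) f) = 0 := by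
    rw [← h2]
    apply Finset.sum_subset
    · exact Finset.range_subset_range.2 (by omega)
    · intro i hi hi'
      simp only [Finset.mem_range] at hi hi'
      rw [Polynomial.coeff_eq_zero_of_natDegree_lt (by omega), zero_mul]
  rw [← h3, ← Finset.sum_range_reflect]
  refine Finset.sum_congr rfl ?_
  intro k hk
  simp only [Finset.mem_range] at hk
  have e1 : d - (d + 1 - 1 - k) = k := by omega
  have e2 : n + (d + 1 - 1 - k) = n + d - k := by omega
  have e3 : d + 1 - 1 - k = d - k := by omega
  simp only [e3] at e1 e2 ⊢
  simp only [e1, e2]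

lemma rational_of_evRec {f : PowerSeries ℚ} (h : EvRec (fun n => PowerSeries.coeff n f)) :
    IsRationalPS f := by
  obtain ⟨d, N, c, hc, hrec⟩ := h
  set q : Polynomial ℚ := ∑ k ∈ Finset.range (d + 1), Polynomial.monomial k (c (d - k)) with hqdef
  have hqc : ∀ i, q.coeff i = if i ≤ d then c (d - i) else 0 := by
    intro i
    rw [hqdef, Polynomial.finset_sum_coeff]
    by_cases hi : i ≤ d
    · rw [Finset.sum_eq_single i]
      · simp [hi]
      · intro b _ hb; simp [Polynomial.coeff_monomial, hb]
      · intro hni; exact absurd (Finset.mem_range.2 (by omega)) hni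
    · rw [if_neg hi]
      apply Finset.sum_eq_zero
      intro k hk
      simp only [Finset.mem_range] at hk
      rw [Polynomial.coeff_monomial, if_neg (by omega)]
  have hvanish : ∀ m, N + d ≤ m → (PowerSeries.coeff m) ((q : PowerSeries ℚ) * f) = 0 := by
    intro m hm
    have key : ∑ i ∈ Finset.range (m + 1), q.coeff i * (PowerSeries.coeff (m - i) f) = 0 := by
      have h2 : ∑ i ∈ Finset.range (m + 1), q.coeff i * (PowerSeries.coeff (m - i) f)
          = ∑ i ∈ Finset.range (d + 1), q.coeff i * (PowerSeries.coeff (m - i) f) := by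
        refine (Finset.sum_subset (Finset.range_subset_range.2 (by omega : d + 1 ≤ m + 1)) ?_).symm
        intro i hi hi'
        simp only [Finset.mem_range] at hi hi'
        rw [hqc, if_neg (by omega), zero_mul]
      rw [h2, ← Finset.sum_range_reflect]
      refine Eq.trans (Finset.sum_congr rfl ?_) (hrec (m - d) (by omega))
      intro k hk
      simp only [Finset.mem_range] at hk
      have e3 : d + 1 - 1 - k = d - k := by omega
      have e1 : d - (d - k) = k := by omega
      have e2 : m - (d - k) = (m - d) + k := by omega
      simp only [e3, hqc, if_pos (by omega : d - k ≤ d), e1, e2]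
    rw [PowerSeries.coeff_mul, Finset.Nat.sum_antidiagonal_eq_sum_range_succ_mk]
    simpa [Polynomial.coeff_coe] using key
  refine ⟨PowerSeries.trunc (N + d) ((q : PowerSeries ℚ) * f), q, ?_, ?_⟩
  · rw [hqc]; simpa using hc
  · ext m
    rw [Polynomial.coeff_coe, PowerSeries.coeff_trunc]
    by_cases hm : m < N + d
    · simp [hm]
    · rw [if_neg hm, hvanish m (by omega)]
open scoped Pointwise

lemma shift_mem_span (a : ℕ → ℚ) (d N : ℕ) (c : ℕ → ℚ) (hc : c d ≠ 0)
    (hrec : ∀ n, N ≤ n → ∑ k ∈ Finset.range (d + 1), c k * a (n + k) = 0) :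
    ∀ m, N ≤ m → (fun n => a (n + m)) ∈
      Submodule.span ℚ ((fun j => (fun n => a (n + (N + j)))) '' (Set.Iio d)) := by
  intro m
  induction m using Nat.strong_induction_on with
  | _ m ih =>
    intro hm
    by_cases hmd : m < N + d
    · exact Submodule.subset_span ⟨m - N, by simp only [Set.mem_Iio]; omega,
        by funext n; simp only; congr 1; omega⟩
    · have key : (fun n => a (n + m))
          = ∑ k ∈ Finset.range d, (-(c k / c d)) • (fun n => a (n + (m - d + k))) := by
        funext t
        have h0 := hrec (t + (m - d)) (by omega)
        rw [Finset.sum_range_succ] at h0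
        simp only [show ∀ k, t + (m - d) + k = t + (m - d + k) from fun k => by omega] at h0
        have e : m - d + d = m := by omega
        rw [e] at h0
        simp only [Finset.sum_apply, Pi.smul_apply, smul_eq_mul]
        have hsum : ∑ k ∈ Finset.range d, (-(c k / c d)) * a (t + (m - d + k))
            = (-(1 / c d)) * ∑ k ∈ Finset.range d, c k * a (t + (m - d + k)) := by
          rw [Finset.mul_sum]
          refine Finset.sum_congr rfl fun k _ => ?_
          field_simp
        rw [hsum]
        have h1 : ∑ k ∈ Finset.range d, c k * a (t + (m - d + k)) = -(c d * a (t + m)) := by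
          linarith
        rw [h1]
        field_simp
      rw [key]
      exact Submodule.sum_mem _ fun k hk =>
        Submodule.smul_mem _ _ (ih (m - d + k) (by simp only [Finset.mem_range] at hk; omega)
          (by omega))

lemma evRec_mul {a b : ℕ → ℚ} (ha : EvRec a) (hb : EvRec b) :
    EvRec (fun n => a n * b n) := by
  obtain ⟨d, N, c, hc, hra⟩ := ha
  obtain ⟨e, M, c', hc', hrb⟩ := hb
  set Ga : Set (ℕ → ℚ) := (fun j => (fun n => a (n + (N + j)))) '' (Set.Iio d) with hGadef
  set Gb : Set (ℕ → ℚ) := (fun j => (fun n => b (n + (M + j)))) '' (Set.Iio e) with hGbdef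
  have hGa := shift_mem_span a d N c hc hra
  have hGb := shift_mem_span b e M c' hc' hrb
  set K := max N M with hK
  set W := Submodule.span ℚ (Ga * Gb) with hW
  have hprod : ∀ m, K ≤ m → (fun n => a (n + m) * b (n + m)) ∈ W := by
    intro m hm
    rw [hW, ← Submodule.span_mul_span]
    exact Submodule.mul_mem_mul (hGa m (le_trans (le_max_left _ _) hm))
      (hGb m (le_trans (le_max_right _ _) hm))
  have hfin : (Ga * Gb).Finite :=
    Set.Finite.mul ((Set.finite_Iio d).image _) ((Set.finite_Iio e).image _)
  haveI : FiniteDimensional ℚ W := FiniteDimensional.span_of_finite ℚ hfin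
  set D := Module.finrank ℚ W with hD
  set v : Fin (D + 1) → W := fun k => ⟨fun n => a (n + (K + k)) * b (n + (K + k)),
    hprod (K + k) (by omega)⟩ with hv
  have hnli : ¬ LinearIndependent ℚ v := by
    intro hli
    have h2 := hli.fintype_card_le_finrank
    simp only [Fintype.card_fin] at h2
    omega
  obtain ⟨g, hgsum, i0, hgi0⟩ := Fintype.not_linearIndependent_iff.1 hnli
  have hgsum' : ∑ i : Fin (D + 1), g i • (fun n => a (n + (K + i)) * b (n + (K + i)) : ℕ → ℚ)
      = 0 := by
    have := congrArg (Subtype.val) hgsum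
    simpa using this
  set g' : ℕ → ℚ := fun k => if h : k < D + 1 then g ⟨k, h⟩ else 0 with hg'
  set S := (Finset.range (D + 1)).filter (fun k => g' k ≠ 0) with hS
  have hSne : S.Nonempty := ⟨i0, by
    simp only [hS, Finset.mem_filter, Finset.mem_range]
    exact ⟨i0.isLt, by simp [hg', i0.isLt, Nat.le_of_lt_succ i0.isLt, Fin.eta, hgi0]⟩⟩
  obtain ⟨k₀, hk₀S, hk₀max⟩ : ∃ k₀ ∈ S, ∀ k ∈ S, k ≤ k₀ := ⟨S.max' hSne, S.max'_mem hSne, fun k hk => S.le_max' k hk⟩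
  have hk₀lt : k₀ < D + 1 := Finset.mem_range.1 (Finset.mem_filter.1 hk₀S).1
  have hk₀ne : g' k₀ ≠ 0 := (Finset.mem_filter.1 hk₀S).2
  have hk₀top : ∀ k, k₀ < k → g' k = 0 := by
    intro k hk
    by_cases hkD : k < D + 1
    · by_contra hne
      have hmem : k ∈ S := by simp [hS, Finset.mem_filter, Finset.mem_range, hkD, hne]
      exact absurd (hk₀max k hmem) (by omega)
    · simp [hg', hkD, show ¬ k ≤ D by omega]
  refine ⟨k₀, K, g', hk₀ne, ?_⟩
  intro n hn
  have hfull : ∑ k ∈ Finset.range (D + 1), g' k * (a (n + k) * b (n + k)) = 0 := by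
    have h3 := congrFun hgsum' (n - K)
    simp only [Finset.sum_apply, Pi.smul_apply, smul_eq_mul, Pi.zero_apply] at h3
    rw [← Fin.sum_univ_eq_sum_range (fun k => g' k * (a (n + k) * b (n + k))) (D + 1)]
    rw [← h3]
    refine Finset.sum_congr rfl fun i _ => ?_
    have e1 : n - K + (K + (i : ℕ)) = n + i := by omega
    rw [e1]
    simp [hg', i.isLt, not_lt.mpr (Nat.le_of_lt_succ i.isLt)]
  rw [← hfull]
  refine Finset.sum_subset (Finset.range_subset_range.2 (by omega)) ?_
  intro k hk hk'
  simp only [Finset.mem_range] at hk hk'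
  rw [hk₀top k (by omega), zero_mul]

/-- The Hadamard product of two rational power series is rational. -/
theorem hadamard_rational (f g : PowerSeries ℚ)
    (hf : IsRationalPS f) (hg : IsRationalPS g) :
    IsRationalPS (hadamard f g) := by
  apply rational_of_evRec
  have h := evRec_mul (evRec_of_rational hf) (evRec_of_rational hg)
  have heq : (fun n => PowerSeries.coeff n (hadamard f g))
      = fun n => (PowerSeries.coeff n f) * (PowerSeries.coeff n g) := by
    funext n; simp [hadamard]
  rw [heq]
  exact h
end

section
/- Each entry of P* = Σ_{n≥0} Pⁿ (for P an N×N matrix over R⟨X⟩ with entries having zero constant term) is a rational power series in noncommuting variables, i.e., lies in the smallest subring of R⟨⟨X⟩⟩ containing R⟨X⟩ and closed under inversion of elements with invertible constant term. -/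
open scoped Classical

/-- The (Cauchy) product of two noncommutative power series in the variables `X`,
viewed as coefficient functions `FreeMonoid X → R`. -/
noncomputable def ncMul {X : Type} {R : Type*} [Semiring R]
    (f g : FreeMonoid X → R) : FreeMonoid X → R := fun w =>
  ∑ m ∈ Finset.range (FreeMonoid.length w + 1),
    f (FreeMonoid.ofList ((FreeMonoid.toList w).take m)) *
      g (FreeMonoid.ofList ((FreeMonoid.toList w).drop m))

/-- The multiplicative unit: the characteristic series of the empty word. -/
noncomputable def ncOne {X : Type} {R : Type*} [Semiring R] : FreeMonoid X → R :=
  fun w => if w = 1 then 1 else 0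


/-- Rational noncommutative power series: the smallest class containing the
noncommutative polynomials `R⟨X⟩` and closed under addition, multiplication, and
inversion of series whose constant term is invertible. -/
inductive IsRatNC {X : Type} {R : Type*} [Semiring R] : (FreeMonoid X → R) → Prop
  | poly (p : MonoidAlgebra R (FreeMonoid X)) : IsRatNC (fun w => p.coeff w)
  | add {f g : FreeMonoid X → R} : IsRatNC f → IsRatNC g → IsRatNC (f + g)
  | mul {f g : FreeMonoid X → R} : IsRatNC f → IsRatNC g → IsRatNC (ncMul f g)
  | inv {f g : FreeMonoid X → R} : IsRatNC f → IsUnit (f 1) →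
      ncMul f g = ncOne → ncMul g f = ncOne → IsRatNC g

namespace NCAux

variable {X : Type} {R : Type*} [Ring R]

lemma length_ofList (l : List X) : FreeMonoid.length (FreeMonoid.ofList l) = l.length := rfl

lemma ncMul_ofList (f g : FreeMonoid X → R) (l : List X) :
    ncMul f g (FreeMonoid.ofList l) = ∑ m ∈ Finset.range (l.length + 1),
      f (FreeMonoid.ofList (l.take m)) * g (FreeMonoid.ofList (l.drop m)) := by
  simp [ncMul, FreeMonoid.toList_ofList, length_ofList]

lemma ofList_eq_one {l : List X} : FreeMonoid.ofList l = 1 ↔ l = [] := by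
  constructor
  · intro h
    have := congrArg FreeMonoid.toList h
    simpa [FreeMonoid.toList_ofList] using this
  · rintro rfl; exact FreeMonoid.ofList_nil

lemma reindex_sum (L : ℕ) (F : ℕ → ℕ → R) :
    ∑ m ∈ Finset.range (L+1), ∑ k ∈ Finset.range (m+1), F k m
      = ∑ k ∈ Finset.range (L+1), ∑ j ∈ Finset.range (L-k+1), F k (k+j) := by
  rw [Finset.sum_sigma', Finset.sum_sigma']
  apply Finset.sum_nbij' (i := fun p => (⟨p.2, p.1 - p.2⟩ : Σ _ : ℕ, ℕ))
    (j := fun p => (⟨p.1 + p.2, p.1⟩ : Σ _ : ℕ, ℕ))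
  · rintro ⟨m, k⟩ hp
    simp only [Finset.mem_sigma, Finset.mem_range] at *; omega
  · rintro ⟨k, j⟩ hp
    simp only [Finset.mem_sigma, Finset.mem_range] at *; omega
  · rintro ⟨m, k⟩ hp
    simp only [Finset.mem_sigma, Finset.mem_range] at *; simp; omega
  · rintro ⟨k, j⟩ hp
    simp only [Finset.mem_sigma, Finset.mem_range] at *; simp
  · rintro ⟨m, k⟩ hp
    simp only [Finset.mem_sigma, Finset.mem_range] at *; congr 1; omega

lemma ncMul_assoc (f g h : FreeMonoid X → R) :
    ncMul (ncMul f g) h = ncMul f (ncMul g h) := by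
  funext w
  rw [← FreeMonoid.ofList_toList w]
  set l := FreeMonoid.toList w with hl
  rw [ncMul_ofList, ncMul_ofList]
  set L := l.length with hL
  calc ∑ m ∈ Finset.range (L + 1),
        ncMul f g (FreeMonoid.ofList (l.take m)) * h (FreeMonoid.ofList (l.drop m))
      = ∑ m ∈ Finset.range (L + 1), ∑ k ∈ Finset.range (m+1),
          f (FreeMonoid.ofList (l.take k)) * g (FreeMonoid.ofList ((l.drop k).take (m - k)))
            * h (FreeMonoid.ofList (l.drop m)) := by
        refine Finset.sum_congr rfl fun m hm => ?_
        rw [Finset.mem_range] at hm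
        rw [ncMul_ofList, Finset.sum_mul]
        have hmt : (l.take m).length = m := by
          rw [List.length_take]; omega
        rw [hmt]
        refine Finset.sum_congr rfl fun k hk => ?_
        rw [Finset.mem_range] at hk
        rw [List.take_take, min_eq_left (by omega : k ≤ m), List.drop_take]
    _ = ∑ k ∈ Finset.range (L + 1), ∑ j ∈ Finset.range (L - k + 1),
          f (FreeMonoid.ofList (l.take k)) * g (FreeMonoid.ofList ((l.drop k).take ((k+j) - k)))
            * h (FreeMonoid.ofList (l.drop (k+j))) := reindex_sum L _
    _ = ∑ k ∈ Finset.range (L + 1),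
          f (FreeMonoid.ofList (l.take k)) * ncMul g h (FreeMonoid.ofList (l.drop k)) := by
        refine Finset.sum_congr rfl fun k hk => ?_
        rw [Finset.mem_range] at hk
        rw [ncMul_ofList, Finset.mul_sum]
        have : (l.drop k).length = L - k := by rw [List.length_drop]
        rw [this]
        refine Finset.sum_congr rfl fun j hj => ?_
        rw [Finset.mem_range] at hj
        rw [mul_assoc, List.drop_drop]
        have h1 : k + j - k = j := by omega
        rw [h1]

lemma ncOne_mul (f : FreeMonoid X → R) : ncMul ncOne f = f := by
  funext w
  rw [← FreeMonoid.ofList_toList w]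
  set l := FreeMonoid.toList w
  rw [ncMul_ofList]
  rw [Finset.sum_eq_single 0]
  · simp [ncOne]
  · intro m hm hm0
    rw [Finset.mem_range] at hm
    have : FreeMonoid.ofList (l.take m) ≠ 1 := by
      rw [Ne, ofList_eq_one, List.take_eq_nil_iff]
      rintro (h | h)
      · exact hm0 h
      · have hl0 : l.length = 0 := by rw [h]; rfl
        omega
    simp [ncOne, this]
  · intro h
    simp at h

lemma ncMul_one (f : FreeMonoid X → R) : ncMul f ncOne = f := by
  funext w
  rw [← FreeMonoid.ofList_toList w]
  set l := FreeMonoid.toList w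
  rw [ncMul_ofList]
  rw [Finset.sum_eq_single l.length]
  · simp [ncOne, List.take_length]
  · intro m hm hm0
    rw [Finset.mem_range] at hm
    have : FreeMonoid.ofList (l.drop m) ≠ 1 := by
      rw [Ne, ofList_eq_one, List.drop_eq_nil_iff]
      omega
    simp [ncOne, this]
  · intro h
    simp at h

lemma ncMul_add (f g h : FreeMonoid X → R) :
    ncMul f (g + h) = ncMul f g + ncMul f h := by
  funext w
  simp [ncMul, Pi.add_apply, mul_add, Finset.sum_add_distrib]

lemma add_ncMul (f g h : FreeMonoid X → R) :
    ncMul (f + g) h = ncMul f h + ncMul g h := by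
  funext w
  simp [ncMul, Pi.add_apply, add_mul, Finset.sum_add_distrib]

lemma zero_ncMul (f : FreeMonoid X → R) : ncMul 0 f = 0 := by
  funext w; simp [ncMul]

lemma ncMul_zero (f : FreeMonoid X → R) : ncMul f 0 = 0 := by
  funext w; simp [ncMul]

end NCAux

def NC (X : Type) (R : Type*) : Type _ := FreeMonoid X → R

namespace NCAux

variable {X : Type} {R : Type*} [Ring R]

instance : AddCommGroup (NC X R) := inferInstanceAs (AddCommGroup (FreeMonoid X → R))

noncomputable instance : Ring (NC X R) :=
  { (inferInstanceAs (AddCommGroup (NC X R)) : AddCommGroup (NC X R)) with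
    mul := ncMul
    one := ncOne
    mul_assoc := ncMul_assoc
    one_mul := ncOne_mul
    mul_one := ncMul_one
    left_distrib := ncMul_add
    right_distrib := fun f g h => add_ncMul f g h
    zero_mul := zero_ncMul
    mul_zero := ncMul_zero }

lemma mul_def (f g : NC X R) : f * g = ncMul f g := rfl
lemma one_def : (1 : NC X R) = ncOne := rfl

lemma mul_coeff_one (f g : NC X R) : (f * g) 1 = f 1 * g 1 := by
  have h : (1 : FreeMonoid X) = FreeMonoid.ofList [] := rfl
  rw [mul_def, h]
  exact (ncMul_ofList f g []).trans (by simp)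

lemma one_coeff_one : (1 : NC X R) 1 = 1 := by
  rw [one_def]; simp [ncOne]

def coeffHom (w : FreeMonoid X) : NC X R →+ R where
  toFun f := f w
  map_zero' := rfl
  map_add' _ _ := rfl

lemma sum_coeff {α : Type*} (s : Finset α) (f : α → NC X R) (w : FreeMonoid X) :
    (∑ a ∈ s, f a) w = ∑ a ∈ s, f a w :=
  map_sum (coeffHom w) f s

lemma single_mul_single_coeff (u v : FreeMonoid X) (a b : R) (l : List X) :
    (MonoidAlgebra.single u a * MonoidAlgebra.single v b : MonoidAlgebra R (FreeMonoid X)).coeff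
        (FreeMonoid.ofList l)
      = ∑ m ∈ Finset.range (l.length + 1),
          (MonoidAlgebra.single u a : MonoidAlgebra R (FreeMonoid X)).coeff
              (FreeMonoid.ofList (l.take m)) *
            (MonoidAlgebra.single v b : MonoidAlgebra R (FreeMonoid X)).coeff
              (FreeMonoid.ofList (l.drop m)) := by
  rw [MonoidAlgebra.single_mul_single]
  by_cases h : u * v = FreeMonoid.ofList l
  · have hl : FreeMonoid.toList u ++ FreeMonoid.toList v = l := by
      have := congrArg FreeMonoid.toList h
      simpa [FreeMonoid.toList_mul, FreeMonoid.toList_ofList] using this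
    set k := (FreeMonoid.toList u).length with hk
    have hkL : k ≤ l.length := by
      rw [← hl]; simp; omega
    have htake : l.take k = FreeMonoid.toList u := by
      rw [← hl]; exact List.take_left
    have hdrop : l.drop k = FreeMonoid.toList v := by
      rw [← hl]; exact List.drop_left
    rw [Finset.sum_eq_single k]
    · rw [htake, hdrop, FreeMonoid.ofList_toList, FreeMonoid.ofList_toList]
      simp [MonoidAlgebra.single_apply, h]
    · intro m hm hmk
      rcases eq_or_ne u (FreeMonoid.ofList (l.take m)) with he | he
      · exfalso
        apply hmk
        have := congrArg FreeMonoid.toList he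
        rw [FreeMonoid.toList_ofList] at this
        have hlen := congrArg List.length this
        rw [List.length_take] at hlen
        rw [Finset.mem_range] at hm
        omega
      · rw [MonoidAlgebra.single_apply, if_neg he, zero_mul]
    · intro hnot
      exact absurd (Finset.mem_range.mpr (by omega)) hnot
  · rw [MonoidAlgebra.single_apply, if_neg h]
    symm
    apply Finset.sum_eq_zero
    intro m hm
    rcases eq_or_ne u (FreeMonoid.ofList (l.take m)) with he | he
    · rcases eq_or_ne v (FreeMonoid.ofList (l.drop m)) with he' | he'
      · exfalso
        apply h
        rw [he, he']
        have : FreeMonoid.ofList (l.take m) * FreeMonoid.ofList (l.drop m)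
            = FreeMonoid.ofList (l.take m ++ l.drop m) := rfl
        rw [this, List.take_append_drop]
      · rw [MonoidAlgebra.single_apply (a := v), if_neg he', mul_zero]
    · rw [MonoidAlgebra.single_apply, if_neg he, zero_mul]

lemma mul_coeff_list (p q : MonoidAlgebra R (FreeMonoid X)) (l : List X) :
    (p * q).coeff (FreeMonoid.ofList l) = ∑ m ∈ Finset.range (l.length + 1),
      p.coeff (FreeMonoid.ofList (l.take m)) * q.coeff (FreeMonoid.ofList (l.drop m)) := by
  induction p using MonoidAlgebra.induction_linear with
  | zero => simp
  | add p1 p2 h1 h2 =>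
    rw [add_mul, MonoidAlgebra.coeff_add, Finsupp.add_apply, h1, h2, ← Finset.sum_add_distrib]
    refine Finset.sum_congr rfl fun m _ => ?_
    rw [MonoidAlgebra.coeff_add, Finsupp.add_apply, add_mul]
  | single u a =>
    induction q using MonoidAlgebra.induction_linear with
    | zero => simp
    | add q1 q2 h1 h2 =>
      rw [mul_add, MonoidAlgebra.coeff_add, Finsupp.add_apply, h1, h2, ← Finset.sum_add_distrib]
      refine Finset.sum_congr rfl fun m _ => ?_
      rw [MonoidAlgebra.coeff_add, Finsupp.add_apply, mul_add]
    | single v b => exact single_mul_single_coeff u v a b l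

noncomputable def toNC : MonoidAlgebra R (FreeMonoid X) →+* NC X R where
  toFun p := fun w => p.coeff w
  map_zero' := rfl
  map_add' p q := rfl
  map_one' := by
    funext w
    show (MonoidAlgebra.single (1 : FreeMonoid X) (1 : R)).coeff w = ncOne w
    rw [MonoidAlgebra.single_apply, ncOne]
    simp [eq_comm]
  map_mul' p q := by
    show _ = ncMul (fun w => p.coeff w) (fun w => q.coeff w)
    funext w
    rw [← FreeMonoid.ofList_toList w, ncMul_ofList]
    exact mul_coeff_list p q (FreeMonoid.toList w)

lemma toNC_coeff (p : MonoidAlgebra R (FreeMonoid X)) (w : FreeMonoid X) :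
    toNC p w = p.coeff w := rfl


section Matrices

variable {X : Type} {R : Type*} [Ring R] {ι : Type} [Fintype ι] [DecidableEq ι]

lemma mat_mul_coeff {κ₁ κ₂ : Type} (M : Matrix κ₁ ι (NC X R)) (N : Matrix ι κ₂ (NC X R))
    (i : κ₁) (j : κ₂) (w : FreeMonoid X) :
    (M * N) i j w = ∑ k, (M i k * N k j) w := by
  rw [Matrix.mul_apply, sum_coeff]

lemma mat_mul_coeff_list' {κ₁ κ₂ : Type} (M : Matrix κ₁ ι (NC X R)) (N : Matrix ι κ₂ (NC X R))
    (i : κ₁) (j : κ₂) (l : List X) :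
    (M * N) i j (FreeMonoid.ofList l)
      = ∑ k, ∑ m ∈ Finset.range (l.length + 1),
          M i k (FreeMonoid.ofList (l.take m)) * N k j (FreeMonoid.ofList (l.drop m)) := by
  rw [mat_mul_coeff]
  exact Finset.sum_congr rfl fun k _ => by rw [mul_def]; exact ncMul_ofList _ _ _

lemma mat_mul_coeff_list (M N : Matrix ι ι (NC X R)) (i j : ι) (l : List X) :
    (M * N) i j (FreeMonoid.ofList l)
      = ∑ k, ∑ m ∈ Finset.range (l.length + 1),
          M i k (FreeMonoid.ofList (l.take m)) * N k j (FreeMonoid.ofList (l.drop m)) := by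
  rw [mat_mul_coeff]
  exact Finset.sum_congr rfl fun k _ => by rw [mul_def]; exact ncMul_ofList _ _ _

lemma pow_coeff_eq_zero (Q : Matrix ι ι (NC X R)) (hQ : ∀ i j, Q i j 1 = 0) :
    ∀ (n : ℕ) (l : List X), l.length < n → ∀ i j, ((Q ^ n) i j) (FreeMonoid.ofList l) = 0 := by
  intro n
  induction n with
  | zero => intro l hl; omega
  | succ n IH =>
    intro l hl i j
    rw [pow_succ', mat_mul_coeff_list]
    apply Finset.sum_eq_zero
    intro k _
    apply Finset.sum_eq_zero
    intro m hm
    rw [Finset.mem_range] at hm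
    rcases Nat.eq_zero_or_pos m with rfl | hm0
    · rw [List.take_zero, FreeMonoid.ofList_nil, hQ, zero_mul]
    · have hlen : (l.drop m).length < n := by rw [List.length_drop]; omega
      rw [IH _ hlen, mul_zero]

noncomputable def mstar (Q : Matrix ι ι (NC X R)) : Matrix ι ι (NC X R) :=
  Matrix.of fun i j => (fun w =>
    ∑ n ∈ Finset.range (FreeMonoid.length w + 1), ((Q ^ n) i j) w : NC X R)

lemma mstar_coeff (Q : Matrix ι ι (NC X R)) (i j : ι) (l : List X) :
    mstar Q i j (FreeMonoid.ofList l)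
      = ∑ n ∈ Finset.range (l.length + 1), ((Q ^ n) i j) (FreeMonoid.ofList l) := rfl

lemma mstar_coeff_trunc (Q : Matrix ι ι (NC X R)) (hQ : ∀ i j, Q i j 1 = 0) (i j : ι)
    (l : List X) (t : ℕ) (ht : l.length ≤ t) :
    mstar Q i j (FreeMonoid.ofList l)
      = ((∑ n ∈ Finset.range (t + 1), Q ^ n) i j) (FreeMonoid.ofList l) := by
  rw [mstar_coeff, Matrix.sum_apply, sum_coeff]
  apply Finset.sum_subset
  · exact Finset.range_subset_range.mpr (by omega)
  · intro n hn hnot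
    rw [Finset.mem_range] at hn
    rw [Finset.mem_range] at hnot
    exact pow_coeff_eq_zero Q hQ n l (by omega) i j

lemma one_sub_mul_mstar (Q : Matrix ι ι (NC X R)) (hQ : ∀ i j, Q i j 1 = 0) :
    (1 - Q) * mstar Q = 1 := by
  apply Matrix.ext
  intro i j
  show ((1 - Q) * mstar Q) i j = ((1 : Matrix ι ι (NC X R)) i j : FreeMonoid X → R)
  funext w
  rw [← FreeMonoid.ofList_toList w]
  set l := FreeMonoid.toList w with hlw
  set L := l.length with hL
  set T : Matrix ι ι (NC X R) := ∑ n ∈ Finset.range (L + 1), Q ^ n with hT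
  have step1 : ((1 - Q) * mstar Q) i j (FreeMonoid.ofList l)
      = ((1 - Q) * T) i j (FreeMonoid.ofList l) := by
    rw [mat_mul_coeff_list, mat_mul_coeff_list]
    refine Finset.sum_congr rfl fun k _ => Finset.sum_congr rfl fun m hm => ?_
    rw [Finset.mem_range] at hm
    congr 1
    exact mstar_coeff_trunc Q hQ k j (l.drop m) L (by rw [List.length_drop]; omega)
  have step2 : (1 - Q) * T = 1 - Q ^ (L + 1) := by
    have h := mul_geom_sum Q (L + 1)
    calc (1 - Q) * T = -((Q - 1) * ∑ n ∈ Finset.range (L + 1), Q ^ n) := by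
          rw [hT]; noncomm_ring
      _ = -(Q ^ (L + 1) - 1) := by rw [h]
      _ = 1 - Q ^ (L + 1) := by noncomm_ring
  rw [step1, step2, Matrix.sub_apply]
  show (1 : Matrix ι ι (NC X R)) i j (FreeMonoid.ofList l)
      - (Q ^ (L + 1)) i j (FreeMonoid.ofList l) = _
  rw [pow_coeff_eq_zero Q hQ (L + 1) l (by omega) i j, sub_zero]

lemma mstar_mul_one_sub (Q : Matrix ι ι (NC X R)) (hQ : ∀ i j, Q i j 1 = 0) :
    mstar Q * (1 - Q) = 1 := by
  apply Matrix.ext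
  intro i j
  show (mstar Q * (1 - Q)) i j = ((1 : Matrix ι ι (NC X R)) i j : FreeMonoid X → R)
  funext w
  rw [← FreeMonoid.ofList_toList w]
  set l := FreeMonoid.toList w with hlw
  set L := l.length with hL
  set T : Matrix ι ι (NC X R) := ∑ n ∈ Finset.range (L + 1), Q ^ n with hT
  have step1 : (mstar Q * (1 - Q)) i j (FreeMonoid.ofList l)
      = (T * (1 - Q)) i j (FreeMonoid.ofList l) := by
    rw [mat_mul_coeff_list, mat_mul_coeff_list]
    refine Finset.sum_congr rfl fun k _ => Finset.sum_congr rfl fun m hm => ?_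
    rw [Finset.mem_range] at hm
    congr 1
    exact mstar_coeff_trunc Q hQ i k (l.take m) L (by rw [List.length_take]; omega)
  have step2 : T * (1 - Q) = 1 - Q ^ (L + 1) := by
    have h := geom_sum_mul Q (L + 1)
    calc T * (1 - Q) = -((∑ n ∈ Finset.range (L + 1), Q ^ n) * (Q - 1)) := by
          rw [hT]; noncomm_ring
      _ = -(Q ^ (L + 1) - 1) := by rw [h]
      _ = 1 - Q ^ (L + 1) := by noncomm_ring
  rw [step1, step2, Matrix.sub_apply]
  show (1 : Matrix ι ι (NC X R)) i j (FreeMonoid.ofList l)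
      - (Q ^ (L + 1)) i j (FreeMonoid.ofList l) = _
  rw [pow_coeff_eq_zero Q hQ (L + 1) l (by omega) i j, sub_zero]

end Matrices

end NCAux

namespace NCAux

section Rat

variable {X : Type} {R : Type*} [Ring R]

lemma isRat_toNC (p : MonoidAlgebra R (FreeMonoid X)) : IsRatNC (toNC p) :=
  IsRatNC.poly p

lemma isRat_zero : IsRatNC (0 : NC X R) := by
  have h := isRat_toNC (0 : MonoidAlgebra R (FreeMonoid X))
  rwa [map_zero] at h

lemma isRat_one : IsRatNC (1 : NC X R) := by
  have h := isRat_toNC (1 : MonoidAlgebra R (FreeMonoid X))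
  rwa [map_one] at h

lemma isRat_add {f g : NC X R} (hf : IsRatNC f) (hg : IsRatNC g) : IsRatNC (f + g) :=
  hf.add hg

lemma isRat_mul {f g : NC X R} (hf : IsRatNC f) (hg : IsRatNC g) : IsRatNC (f * g) :=
  hf.mul hg

lemma isRat_neg {f : NC X R} (hf : IsRatNC f) : IsRatNC (-f) := by
  have h : (-f : NC X R) = toNC (-1) * f := by rw [map_neg, map_one, neg_one_mul]
  rw [h]
  exact isRat_mul (isRat_toNC _) hf

lemma isRat_sub {f g : NC X R} (hf : IsRatNC f) (hg : IsRatNC g) : IsRatNC (f - g) := by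
  rw [sub_eq_add_neg]
  exact isRat_add hf (isRat_neg hg)

lemma isRat_sum {α : Type*} (s : Finset α) (f : α → NC X R)
    (h : ∀ a ∈ s, IsRatNC (f a)) : IsRatNC (∑ a ∈ s, f a) :=
  Finset.sum_induction f (fun g => IsRatNC g) (fun _ _ ha hb => ha.add hb) isRat_zero h

variable {ι : Type} [Fintype ι] [DecidableEq ι]

lemma isRat_matMul {κ₁ κ₂ : Type} (M : Matrix κ₁ ι (NC X R)) (N : Matrix ι κ₂ (NC X R))
    (hM : ∀ i j, IsRatNC (M i j))
    (hN : ∀ i j, IsRatNC (N i j)) (i : κ₁) (j : κ₂) : IsRatNC ((M * N) i j) := by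
  rw [Matrix.mul_apply]
  exact isRat_sum _ _ fun k _ => isRat_mul (hM i k) (hN k j)

lemma isRat_matOne (i j : ι) : IsRatNC ((1 : Matrix ι ι (NC X R)) i j) := by
  rw [Matrix.one_apply]
  split
  · exact isRat_one
  · exact isRat_zero

lemma mat_mul_coeff_one {κ₁ κ₂ : Type} (M : Matrix κ₁ ι (NC X R)) (N : Matrix ι κ₂ (NC X R))
    (i : κ₁) (j : κ₂) :
    (M * N) i j 1 = ∑ k, M i k 1 * N k j 1 := by
  rw [mat_mul_coeff]
  exact Finset.sum_congr rfl fun k _ => mul_coeff_one _ _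

lemma sstar_isRat [Subsingleton ι] (Q : Matrix ι ι (NC X R))
    (hrat : ∀ i j, IsRatNC (Q i j)) (h0 : ∀ i j, Q i j 1 = 0) (i j : ι) :
    IsRatNC (mstar Q i j) := by
  have hij : i = j := Subsingleton.elim i j
  subst hij
  have hfrat : IsRatNC ((1 - Q) i i) := by
    rw [Matrix.sub_apply]
    exact isRat_sub (isRat_matOne i i) (hrat i i)
  have hunit : IsUnit (((1 - Q) i i : NC X R) 1) := by
    have h1 : ((1 - Q) i i : NC X R) 1 = (1 : Matrix ι ι (NC X R)) i i 1 - Q i i 1 := rfl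
    rw [h1, h0, Matrix.one_apply_eq, one_coeff_one, sub_zero]
    exact isUnit_one
  have hmul1 : ncMul ((1 - Q) i i) (mstar Q i i) = ncOne := by
    have h := one_sub_mul_mstar Q h0
    have h2 : ((1 - Q) * mstar Q) i i = (1 : Matrix ι ι (NC X R)) i i := by rw [h]
    rw [Matrix.mul_apply, Fintype.sum_subsingleton _ i, Matrix.one_apply_eq] at h2
    exact h2
  have hmul2 : ncMul (mstar Q i i) ((1 - Q) i i) = ncOne := by
    have h := mstar_mul_one_sub Q h0
    have h2 : (mstar Q * (1 - Q)) i i = (1 : Matrix ι ι (NC X R)) i i := by rw [h]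
    rw [Matrix.mul_apply, Fintype.sum_subsingleton _ i, Matrix.one_apply_eq] at h2
    exact h2
  exact IsRatNC.inv hfrat hunit hmul1 hmul2

lemma key (n : ℕ) : ∀ (κ : Type) [Fintype κ] [DecidableEq κ], Fintype.card κ = n →
    ∀ Q : Matrix κ κ (NC X R), (∀ i j, IsRatNC (Q i j)) → (∀ i j, Q i j 1 = 0) →
    ∀ i j, IsRatNC (mstar Q i j) := by
  induction n with
  | zero =>
    intro κ _ _ hcard Q _ _ i j
    have : IsEmpty κ := Fintype.card_eq_zero_iff.mp hcard
    exact isEmptyElim i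
  | succ n IH =>
    intro κ _ _ hcard Q hrat h0 i j
    set e : κ ≃ (Fin n ⊕ Fin 1) :=
      (Fintype.equivFinOfCardEq hcard).trans finSumFinEquiv.symm with he
    set Q' : Matrix (Fin n ⊕ Fin 1) (Fin n ⊕ Fin 1) (NC X R) :=
      Q.submatrix e.symm e.symm with hQ'
    have hQ'rat : ∀ i j, IsRatNC (Q' i j) := fun i j => hrat _ _
    have hQ'0 : ∀ i j, Q' i j 1 = 0 := fun i j => h0 _ _
    set A := Q'.toBlocks₁₁ with hA
    set b := Q'.toBlocks₁₂ with hb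
    set c := Q'.toBlocks₂₁ with hc
    set d := Q'.toBlocks₂₂ with hd
    have hQblocks : Matrix.fromBlocks A b c d = Q' := Matrix.fromBlocks_toBlocks Q'
    have hd0 : ∀ i j, d i j 1 = 0 := fun i j => hQ'0 _ _
    have hdrat : ∀ i j, IsRatNC (d i j) := fun i j => hQ'rat _ _
    have hA0 : ∀ i j, A i j 1 = 0 := fun i j => hQ'0 _ _
    have hArat : ∀ i j, IsRatNC (A i j) := fun i j => hQ'rat _ _
    have hb0 : ∀ i j, b i j 1 = 0 := fun i j => hQ'0 _ _
    have hbrat : ∀ i j, IsRatNC (b i j) := fun i j => hQ'rat _ _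
    have hcrat : ∀ i j, IsRatNC (c i j) := fun i j => hQ'rat _ _
    set Ds := mstar d with hDs
    have hDsrat : ∀ i j, IsRatNC (Ds i j) := sstar_isRat d hdrat hd0
    have hd1 : (1 - d) * Ds = 1 := one_sub_mul_mstar d hd0
    have hd2 : Ds * (1 - d) = 1 := mstar_mul_one_sub d hd0
    set F := A + b * Ds * c with hF
    have hF0 : ∀ i j, F i j 1 = 0 := by
      intro i j
      have h1 : F i j 1 = A i j 1 + (b * (Ds * c)) i j 1 := by
        rw [hF, Matrix.mul_assoc]; rfl
      rw [h1, hA0, mat_mul_coeff_one, Finset.sum_eq_zero (fun k _ => by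
        rw [hb0, zero_mul]), add_zero]
    have hFrat : ∀ i j, IsRatNC (F i j) := by
      intro i j
      have h1 : F i j = A i j + (b * Ds * c) i j := rfl
      rw [h1]
      exact isRat_add (hArat i j)
        (isRat_matMul _ _ (fun i j => isRat_matMul _ _ hbrat hDsrat i j) hcrat i j)
    set E := mstar F with hE
    have hErat : ∀ i j, IsRatNC (E i j) := IH (Fin n) (by simp) F hFrat hF0
    have hE1 : (1 - F) * E = 1 := one_sub_mul_mstar F hF0
    have hE2 : E * (1 - F) = 1 := mstar_mul_one_sub F hF0
    set Z' : Matrix (Fin n ⊕ Fin 1) (Fin n ⊕ Fin 1) (NC X R) :=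
      Matrix.fromBlocks E (E * b * Ds) (Ds * c * E) (Ds + Ds * c * E * b * Ds) with hZ'
    have hZ'rat : ∀ i j, IsRatNC (Z' i j) := by
      rintro (i | i) (j | j)
      · rw [hZ', Matrix.fromBlocks_apply₁₁]; exact hErat i j
      · rw [hZ', Matrix.fromBlocks_apply₁₂]
        exact isRat_matMul _ _ (fun i j => isRat_matMul _ _ hErat hbrat i j) hDsrat i j
      · rw [hZ', Matrix.fromBlocks_apply₂₁]
        exact isRat_matMul _ _ (fun i j => isRat_matMul _ _ hDsrat hcrat i j) hErat i j
      · rw [hZ', Matrix.fromBlocks_apply₂₂]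
        have h1 : (Ds + Ds * c * E * b * Ds) i j = Ds i j + (Ds * c * E * b * Ds) i j := rfl
        rw [h1]
        exact isRat_add (hDsrat i j)
          (isRat_matMul _ _
            (fun i j => isRat_matMul _ _
              (fun i j => isRat_matMul _ _
                (fun i j => isRat_matMul _ _ hDsrat hcrat i j) hErat i j) hbrat i j)
            hDsrat i j)
    have hd1' : Ds - d * Ds = 1 := by
      have h := hd1
      simp only [Matrix.sub_mul, Matrix.one_mul] at h
      exact h
    have hd2' : Ds - Ds * d = 1 := by
      have h := hd2
      simp only [Matrix.mul_sub, Matrix.mul_one] at h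
      exact h
    have hE1' : E - (A * E + b * Ds * c * E) = 1 := by
      have h := hE1
      rw [hF] at h
      simp only [Matrix.sub_mul, Matrix.add_mul, Matrix.one_mul, ← Matrix.mul_assoc] at h
      exact h
    have hE2' : E - (E * A + E * b * Ds * c) = 1 := by
      have h := hE2
      rw [hF] at h
      simp only [Matrix.mul_sub, Matrix.mul_add, Matrix.mul_one, ← Matrix.mul_assoc] at h
      exact h
    have hone : (1 : Matrix (Fin n ⊕ Fin 1) (Fin n ⊕ Fin 1) (NC X R))
        = Matrix.fromBlocks 1 0 0 1 := Matrix.fromBlocks_one.symm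
    have hsub : 1 - Q' = Matrix.fromBlocks (1 - A) (-b) (-c) (1 - d) := by
      rw [← hQblocks, hone, sub_eq_add_neg, Matrix.fromBlocks_neg, Matrix.fromBlocks_add]
      congr 1 <;> simp [sub_eq_add_neg]
    have hTL : (1 - A) * E + (-b) * (Ds * c * E) = 1 := by
      calc (1 - A) * E + (-b) * (Ds * c * E)
          = E - (A * E + b * Ds * c * E) := by
            simp only [Matrix.sub_mul, Matrix.neg_mul, Matrix.one_mul, ← Matrix.mul_assoc]
            abel
        _ = 1 := hE1'
    have hTR : (1 - A) * (E * b * Ds) + (-b) * (Ds + Ds * c * E * b * Ds) = 0 := by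
      have h : E * b * Ds - (A * E * b * Ds + b * Ds * c * E * b * Ds) = b * Ds := by
        have h2 := congrArg (fun M => M * (b * Ds)) hE1'
        simp only [Matrix.sub_mul, Matrix.add_mul, Matrix.one_mul, ← Matrix.mul_assoc] at h2
        exact h2
      calc (1 - A) * (E * b * Ds) + (-b) * (Ds + Ds * c * E * b * Ds)
          = (E * b * Ds - (A * E * b * Ds + b * Ds * c * E * b * Ds)) - b * Ds := by
            simp only [Matrix.sub_mul, Matrix.neg_mul, Matrix.mul_add, Matrix.one_mul,
              ← Matrix.mul_assoc]
            abel
        _ = b * Ds - b * Ds := by rw [h]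
        _ = 0 := sub_self _
    have hBL : (-c) * E + (1 - d) * (Ds * c * E) = 0 := by
      have h : Ds * c * E - d * Ds * c * E = c * E := by
        have h2 := congrArg (fun M => M * (c * E)) hd1'
        simp only [Matrix.sub_mul, Matrix.one_mul, ← Matrix.mul_assoc] at h2
        exact h2
      calc (-c) * E + (1 - d) * (Ds * c * E)
          = (Ds * c * E - d * Ds * c * E) - c * E := by
            simp only [Matrix.sub_mul, Matrix.neg_mul, Matrix.one_mul, ← Matrix.mul_assoc]
            abel
        _ = c * E - c * E := by rw [h]
        _ = 0 := sub_self _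
    have hBR : (-c) * (E * b * Ds) + (1 - d) * (Ds + Ds * c * E * b * Ds) = 1 := by
      have h : Ds * c * E * b * Ds - d * Ds * c * E * b * Ds = c * E * b * Ds := by
        have h2 := congrArg (fun M => M * (c * E * b * Ds)) hd1'
        simp only [Matrix.sub_mul, Matrix.one_mul, ← Matrix.mul_assoc] at h2
        exact h2
      calc (-c) * (E * b * Ds) + (1 - d) * (Ds + Ds * c * E * b * Ds)
          = (Ds - d * Ds) + ((Ds * c * E * b * Ds - d * Ds * c * E * b * Ds)
              - c * E * b * Ds) := by
            simp only [Matrix.sub_mul, Matrix.neg_mul, Matrix.mul_add, Matrix.one_mul,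
              ← Matrix.mul_assoc]
            abel
        _ = 1 + (c * E * b * Ds - c * E * b * Ds) := by rw [hd1', h]
        _ = 1 := by rw [sub_self, add_zero]
    have hinv1 : (1 - Q') * Z' = 1 := by
      rw [hsub, hZ', Matrix.fromBlocks_multiply, hTL, hTR, hBL, hBR,
        Matrix.fromBlocks_one]
    have hTL' : E * (1 - A) + (E * b * Ds) * (-c) = 1 := by
      calc E * (1 - A) + (E * b * Ds) * (-c)
          = E - (E * A + E * b * Ds * c) := by
            simp only [Matrix.mul_sub, Matrix.mul_neg, Matrix.mul_one, ← Matrix.mul_assoc]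
            abel
        _ = 1 := hE2'
    have hTR' : E * (-b) + (E * b * Ds) * (1 - d) = 0 := by
      have h : E * b * Ds - E * b * Ds * d = E * b := by
        have h2 := congrArg (fun M => (E * b) * M) hd2'
        simp only [Matrix.mul_sub, Matrix.mul_one, ← Matrix.mul_assoc] at h2
        exact h2
      calc E * (-b) + (E * b * Ds) * (1 - d)
          = (E * b * Ds - E * b * Ds * d) - E * b := by
            simp only [Matrix.mul_sub, Matrix.mul_neg, Matrix.mul_one, ← Matrix.mul_assoc]
            abel
        _ = E * b - E * b := by rw [h]
        _ = 0 := sub_self _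
    have hBL' : (Ds * c * E) * (1 - A) + (Ds + Ds * c * E * b * Ds) * (-c) = 0 := by
      have h : Ds * c * E - (Ds * c * E * A + Ds * c * E * b * Ds * c) = Ds * c := by
        have h2 := congrArg (fun M => (Ds * c) * M) hE2'
        simp only [Matrix.mul_sub, Matrix.mul_add, Matrix.mul_one, ← Matrix.mul_assoc] at h2
        exact h2
      calc (Ds * c * E) * (1 - A) + (Ds + Ds * c * E * b * Ds) * (-c)
          = (Ds * c * E - (Ds * c * E * A + Ds * c * E * b * Ds * c)) - Ds * c := by
            simp only [Matrix.mul_sub, Matrix.mul_neg, Matrix.add_mul, Matrix.mul_one,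
              ← Matrix.mul_assoc]
            abel
        _ = Ds * c - Ds * c := by rw [h]
        _ = 0 := sub_self _
    have hBR' : (Ds * c * E) * (-b) + (Ds + Ds * c * E * b * Ds) * (1 - d) = 1 := by
      have h : Ds * c * E * b * Ds - Ds * c * E * b * Ds * d = Ds * c * E * b := by
        have h2 := congrArg (fun M => (Ds * c * E * b) * M) hd2'
        simp only [Matrix.mul_sub, Matrix.mul_one, ← Matrix.mul_assoc] at h2
        exact h2
      calc (Ds * c * E) * (-b) + (Ds + Ds * c * E * b * Ds) * (1 - d)
          = (Ds - Ds * d) + ((Ds * c * E * b * Ds - Ds * c * E * b * Ds * d)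
              - Ds * c * E * b) := by
            simp only [Matrix.mul_sub, Matrix.mul_neg, Matrix.add_mul, Matrix.mul_one,
              ← Matrix.mul_assoc]
            abel
        _ = 1 + (Ds * c * E * b - Ds * c * E * b) := by rw [hd2', h]
        _ = 1 := by rw [sub_self, add_zero]
    have hinv2 : Z' * (1 - Q') = 1 := by
      rw [hsub, hZ', Matrix.fromBlocks_multiply, hTL', hTR', hBL', hBR',
        Matrix.fromBlocks_one]
    set Z : Matrix κ κ (NC X R) := Z'.submatrix e e with hZ
    have hsubQ : (1 - Q').submatrix e e = 1 - Q := by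
      rw [Matrix.submatrix_sub, Pi.sub_apply, Pi.sub_apply, Matrix.submatrix_one_equiv,
        hQ', Matrix.submatrix_submatrix]
      simp
    have h1 : (1 - Q) * Z = 1 := by
      calc (1 - Q) * Z = (1 - Q').submatrix e e * Z'.submatrix e e := by rw [hsubQ]
        _ = ((1 - Q') * Z').submatrix e e := Matrix.submatrix_mul_equiv _ _ _ e _
        _ = 1 := by rw [hinv1, Matrix.submatrix_one_equiv]
    have h2 : Z * (1 - Q) = 1 := by
      calc Z * (1 - Q) = Z'.submatrix e e * (1 - Q').submatrix e e := by rw [hsubQ]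
        _ = (Z' * (1 - Q')).submatrix e e := Matrix.submatrix_mul_equiv _ _ _ e _
        _ = 1 := by rw [hinv2, Matrix.submatrix_one_equiv]
    have hZeq : Z = mstar Q := left_inv_eq_right_inv h2 (one_sub_mul_mstar Q h0)
    rw [← hZeq]
    exact hZ'rat (e i) (e j)

end Rat

end NCAux

/-- Each entry of `P* = Σₙ Pⁿ` (for `P` a matrix of noncommutative polynomials whose
entries have zero constant term) is a rational noncommutative power series. -/
theorem geometric_series_entries_rational {X : Type} [Fintype X] {N : ℕ} {R : Type*}
    [Field R] (P : Matrix (Fin N) (Fin N) (MonoidAlgebra R (FreeMonoid X)))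
    (hP : ∀ i j, (P i j).coeff 1 = 0) (i j : Fin N) :
    IsRatNC (fun w : FreeMonoid X =>
      ∑ n ∈ Finset.range (FreeMonoid.length w + 1), ((P ^ n) i j).coeff w) := by
  classical
  set Q : Matrix (Fin N) (Fin N) (NC X R) := P.map NCAux.toNC with hQ
  have hpow : ∀ (n : ℕ) (i j : Fin N) (w : FreeMonoid X),
      ((P ^ n) i j).coeff w = ((Q ^ n) i j) w := by
    intro n i j w
    have h1 : Q = NCAux.toNC.mapMatrix P := rfl
    have h2 : Q ^ n = (P ^ n).map NCAux.toNC := by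
      rw [h1, ← map_pow, RingHom.mapMatrix_apply]
    rw [h2]
    rfl
  have hgoal : (fun w : FreeMonoid X =>
      ∑ n ∈ Finset.range (FreeMonoid.length w + 1), ((P ^ n) i j).coeff w)
      = NCAux.mstar Q i j := by
    funext w
    have h1 : NCAux.mstar Q i j w
        = ∑ n ∈ Finset.range (FreeMonoid.length w + 1), ((Q ^ n) i j) w := rfl
    rw [h1]
    exact Finset.sum_congr rfl fun n _ => hpow n i j w
  rw [hgoal]
  exact NCAux.key N (Fin N) (by simp) Q
    (fun i j => NCAux.isRat_toNC (P i j))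
    (fun i j => hP i j) i j
end

section
/- If a formal power series f ∈ ℚ[[z]] is algebraic over ℚ(z) (satisfies a nonzero polynomial equation Q(f, z) = 0 with Q ∈ ℚ[y,z]), then f is holonomic: it satisfies a nontrivial linear differential equation with coefficients in ℚ[z]. -/
open Polynomial PowerSeries

namespace AlgHolAux

noncomputable section

abbrev K : Type := FractionRing (PowerSeries ℚ)

def ι : PowerSeries ℚ →+* K := algebraMap _ _

lemma ι_inj : Function.Injective ι := IsFractionRing.injective _ _

lemma ι_ne {a : PowerSeries ℚ} (ha : a ≠ 0) : ι a ≠ 0 := by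
  intro h
  exact ha (ι_inj (by simpa using h))

/-- Derivative on the fraction field of `ℚ⟦X⟧`. -/
def D (x : K) : K :=
  (ι (IsLocalization.sec (nonZeroDivisors (PowerSeries ℚ)) x).1.derivativeFun *
      ι ((IsLocalization.sec (nonZeroDivisors (PowerSeries ℚ)) x).2 : PowerSeries ℚ) -
    ι (IsLocalization.sec (nonZeroDivisors (PowerSeries ℚ)) x).1 *
      ι ((IsLocalization.sec (nonZeroDivisors (PowerSeries ℚ)) x).2 : PowerSeries ℚ).derivativeFun) /
    (ι ((IsLocalization.sec (nonZeroDivisors (PowerSeries ℚ)) x).2 : PowerSeries ℚ)) ^ 2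

lemma exists_rep (x : K) : ∃ a b : PowerSeries ℚ, b ≠ 0 ∧ x * ι b = ι a := by
  refine ⟨(IsLocalization.sec (nonZeroDivisors (PowerSeries ℚ)) x).1,
    (IsLocalization.sec (nonZeroDivisors (PowerSeries ℚ)) x).2, ?_, ?_⟩
  · exact nonZeroDivisors.coe_ne_zero _
  · exact IsLocalization.sec_spec _ x

lemma D_spec {x : K} {a b : PowerSeries ℚ} (hb : b ≠ 0) (h : x * ι b = ι a) :
    D x = (ι a.derivativeFun * ι b - ι a * ι b.derivativeFun) / (ι b) ^ 2 := by
  set a' := (IsLocalization.sec (nonZeroDivisors (PowerSeries ℚ)) x).1 with ha'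
  set b' := ((IsLocalization.sec (nonZeroDivisors (PowerSeries ℚ)) x).2 : PowerSeries ℚ) with hb'
  have hb'0 : b' ≠ 0 := nonZeroDivisors.coe_ne_zero _
  have h' : x * ι b' = ι a' := IsLocalization.sec_spec _ x
  have hE1 : a * b' = a' * b := by
    apply ι_inj
    rw [map_mul, map_mul, ← h, ← h']
    ring
  have hE2 : a.derivativeFun * b' + a * b'.derivativeFun
      = a'.derivativeFun * b + a' * b.derivativeFun := by
    have h2 := congrArg derivativeFun hE1
    rw [derivativeFun_mul, derivativeFun_mul, smul_eq_mul, smul_eq_mul, smul_eq_mul,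
      smul_eq_mul] at h2
    linear_combination h2
  have e1 : ι a * ι b' = ι a' * ι b := by rw [← map_mul, ← map_mul, hE1]
  have e2 : ι a.derivativeFun * ι b' + ι a * ι b'.derivativeFun
      = ι a'.derivativeFun * ι b + ι a' * ι b.derivativeFun := by
    rw [← map_mul, ← map_mul, ← map_mul, ← map_mul, ← map_add, ← map_add, hE2]
  show (ι a'.derivativeFun * ι b' - ι a' * ι b'.derivativeFun) / (ι b') ^ 2 = _
  rw [div_eq_div_iff (pow_ne_zero 2 (ι_ne hb'0)) (pow_ne_zero 2 (ι_ne hb))]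
  linear_combination (ι b.derivativeFun * ι b' + ι b'.derivativeFun * ι b) * e1 - (ι b * ι b') * e2


lemma x_eq {x : K} {a b : PowerSeries ℚ} (hb : b ≠ 0) (h : x * ι b = ι a) :
    x = ι a / ι b := by
  rw [eq_div_iff (ι_ne hb), h]

lemma D_ι (a : PowerSeries ℚ) : D (ι a) = ι a.derivativeFun := by
  have h : ι a * ι (1 : PowerSeries ℚ) = ι a := by rw [map_one, mul_one]
  rw [D_spec one_ne_zero h, derivativeFun_one, map_one, map_zero]
  ring

lemma D_add (x y : K) : D (x + y) = D x + D y := by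
  obtain ⟨a, b, hb, hab⟩ := exists_rep x
  obtain ⟨c, e, he, hce⟩ := exists_rep y
  have hbe : b * e ≠ 0 := mul_ne_zero hb he
  have h : (x + y) * ι (b * e) = ι (a * e + c * b) := by
    rw [map_mul, map_add, map_mul, map_mul]
    calc (x + y) * (ι b * ι e) = (x * ι b) * ι e + (y * ι e) * ι b := by ring
    _ = ι a * ι e + ι c * ι b := by rw [hab, hce]
  rw [D_spec hb hab, D_spec he hce, D_spec hbe h, derivativeFun_add, derivativeFun_mul,
    derivativeFun_mul, derivativeFun_mul]
  have h1 : ι b ≠ 0 := ι_ne hb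
  have h2 : ι e ≠ 0 := ι_ne he
  simp only [smul_eq_mul, map_add, map_mul]
  field_simp
  ring

lemma D_mul (x y : K) : D (x * y) = D x * y + x * D y := by
  obtain ⟨a, b, hb, hab⟩ := exists_rep x
  obtain ⟨c, e, he, hce⟩ := exists_rep y
  have hbe : b * e ≠ 0 := mul_ne_zero hb he
  have h : (x * y) * ι (b * e) = ι (a * c) := by
    rw [map_mul, map_mul]
    calc (x * y) * (ι b * ι e) = (x * ι b) * (y * ι e) := by ring
    _ = ι a * ι c := by rw [hab, hce]
  rw [D_spec hb hab, D_spec he hce, D_spec hbe h, derivativeFun_mul, x_eq hb hab, x_eq he hce]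
  have h1 : ι b ≠ 0 := ι_ne hb
  have h2 : ι e ≠ 0 := ι_ne he
  simp only [derivativeFun_mul, smul_eq_mul, map_add, map_mul]
  field_simp
  ring

lemma D_zero : D 0 = 0 := by
  have : D (0 + 0) = D 0 + D 0 := D_add 0 0
  rw [add_zero] at this
  have h2 : D 0 + D 0 = D 0 + 0 := by rw [add_zero]; exact this.symm
  exact add_left_cancel h2

lemma D_one : D 1 = 0 := by
  have h := D_ι 1
  rwa [map_one, derivativeFun_one, map_zero] at h

lemma D_pow (x : K) (m : ℕ) : D (x ^ (m + 1)) = (m + 1 : K) * x ^ m * D x := by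
  induction m with
  | zero => simp
  | succ k ih =>
      have : x ^ (k + 1 + 1) = x * x ^ (k + 1) := by ring
      rw [this, D_mul, ih]
      push_cast
      ring


def g : Polynomial ℚ →+* K := ι.comp Polynomial.coeToPowerSeries.ringHom

lemma g_inj : Function.Injective g := by
  intro p q h
  apply Polynomial.coe_injective ℚ
  exact ι_inj h

def lft : RatFunc ℚ →+* K := IsFractionRing.lift (K := RatFunc ℚ) g_inj

instance : Algebra (RatFunc ℚ) K := lft.toAlgebra

lemma smul_def (c : RatFunc ℚ) (x : K) : c • x = lft c * x := rfl

lemma algebraMap_eq : algebraMap (RatFunc ℚ) K = lft := rfl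

lemma lft_alg (p : Polynomial ℚ) :
    lft (algebraMap (Polynomial ℚ) (RatFunc ℚ) p) = ι (p : PowerSeries ℚ) := by
  have h := IsFractionRing.lift_algebraMap (L := K) (K := RatFunc ℚ) g_inj p
  simpa [lft, g, Polynomial.coeToPowerSeries.ringHom_apply] using h

lemma D_lft (c : RatFunc ℚ) : ∃ c₂ : RatFunc ℚ, D (lft c) = lft c₂ := by
  set p := c.num with hp
  set q := c.denom with hqdef
  have hq : q ≠ 0 := c.denom_ne_zero
  have hq' : algebraMap (Polynomial ℚ) (RatFunc ℚ) q ≠ 0 := RatFunc.algebraMap_ne_zero hq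
  have hcq : c * algebraMap (Polynomial ℚ) (RatFunc ℚ) q
      = algebraMap (Polynomial ℚ) (RatFunc ℚ) p := by
    have := RatFunc.num_div_denom c
    rw [div_eq_iff hq'] at this
    rw [← this]
  have key : lft c * ι (q : PowerSeries ℚ) = ι (p : PowerSeries ℚ) := by
    rw [← lft_alg q, ← lft_alg p, ← map_mul, hcq]
  have hιq : ι (q : PowerSeries ℚ) ≠ 0 :=
    ι_ne (by rwa [ne_eq, Polynomial.coe_eq_zero_iff])
  have hD := congrArg D key
  have hdc : ∀ r : Polynomial ℚ, derivativeFun (r : PowerSeries ℚ)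
      = ((Polynomial.derivative r : Polynomial ℚ) : PowerSeries ℚ) :=
    fun r => PowerSeries.derivative_coe r
  rw [D_mul, D_ι, D_ι, hdc, hdc] at hD
  refine ⟨(algebraMap (Polynomial ℚ) (RatFunc ℚ) (Polynomial.derivative p)
      - c * algebraMap (Polynomial ℚ) (RatFunc ℚ) (Polynomial.derivative q))
      / algebraMap (Polynomial ℚ) (RatFunc ℚ) q, ?_⟩
  rw [map_div₀, map_sub, map_mul, lft_alg, lft_alg, lft_alg, eq_div_iff hιq]
  linear_combination hD

end

end AlgHolAux

set_option synthInstance.maxHeartbeats 1000000 in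
set_option maxHeartbeats 2000000 in
open Polynomial PowerSeries AlgHolAux in
/-- Every algebraic power series is holonomic. -/
theorem algebraic_isHolonomic (f : PowerSeries ℚ) (hf : IsAlgebraicPS f) :
    IsHolonomicPS f := by
  classical
  obtain ⟨Q₀, hQ₀ne, hQ₀⟩ := hf
  have hex : ∃ m : ℕ, ∃ Q : Polynomial (Polynomial ℚ), Q ≠ 0 ∧
      Polynomial.eval₂ Polynomial.coeToPowerSeries.ringHom f Q = 0 ∧ Q.natDegree = m :=
    ⟨Q₀.natDegree, Q₀, hQ₀ne, hQ₀, rfl⟩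
  obtain ⟨Q, hQne, hQ0, hQdeg⟩ := Nat.find_spec hex
  set n := Nat.find hex with hn
  have hQmin : ∀ R : Polynomial (Polynomial ℚ), R ≠ 0 →
      Polynomial.eval₂ Polynomial.coeToPowerSeries.ringHom f R = 0 → n ≤ R.natDegree :=
    fun R h1 h2 => Nat.find_min' hex ⟨R, h1, h2, rfl⟩
  have hn0 : 0 < n := by
    rcases Nat.eq_zero_or_pos n with h0 | h; swap
    · exact h
    exfalso
    have hdeg0 : Q.natDegree = 0 := by rw [hQdeg, h0]
    have hQC : Q = Polynomial.C (Q.coeff 0) := Polynomial.eq_C_of_natDegree_eq_zero hdeg0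
    rw [hQC, Polynomial.eval₂_C, Polynomial.coeToPowerSeries.ringHom_apply,
      Polynomial.coe_eq_zero_iff] at hQ0
    exact hQne (by rw [hQC, hQ0, map_zero])
  set F : K := ι f with hFdef
  set W : Submodule (RatFunc ℚ) K :=
    Submodule.span (RatFunc ℚ) (Set.range fun i : Fin n => F ^ (i : ℕ)) with hWdef
  have hFi : ∀ i : ℕ, i < n → F ^ i ∈ W := fun i hi =>
    Submodule.subset_span ⟨⟨i, hi⟩, rfl⟩
  have hone : (1 : K) ∈ W := by simpa using hFi 0 hn0
  -- ι of polynomial evaluations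
  have hιeval : ∀ R : Polynomial (Polynomial ℚ),
      ι (Polynomial.eval₂ Polynomial.coeToPowerSeries.ringHom f R)
        = ∑ i ∈ Finset.range (R.natDegree + 1),
          (algebraMap (Polynomial ℚ) (RatFunc ℚ) (R.coeff i)) • F ^ i := by
    intro R
    rw [Polynomial.eval₂_eq_sum_range, map_sum]
    refine Finset.sum_congr rfl fun i _ => ?_
    rw [map_mul, map_pow, smul_def, lft_alg, Polynomial.coeToPowerSeries.ringHom_apply]
  have hmemlt : ∀ R : Polynomial (Polynomial ℚ), R.natDegree < n →
      ι (Polynomial.eval₂ Polynomial.coeToPowerSeries.ringHom f R) ∈ W := by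
    intro R hR
    rw [hιeval]
    exact Submodule.sum_mem _ fun i hi => Submodule.smul_mem _ _
      (hFi i (lt_of_lt_of_le (Finset.mem_range.mp hi) (Nat.succ_le_of_lt hR)))
  -- F ^ n ∈ W
  have hlcne : Q.leadingCoeff ≠ 0 := Polynomial.leadingCoeff_ne_zero.mpr hQne
  have hFn : F ^ n ∈ W := by
    have hE : Q.eraseLead.natDegree < n :=
      lt_of_le_of_lt (Polynomial.eraseLead_natDegree_le Q) (by omega)
    have h1 : Polynomial.eval₂ Polynomial.coeToPowerSeries.ringHom f Q.eraseLead
        + Polynomial.coeToPowerSeries.ringHom Q.leadingCoeff * f ^ n = 0 := by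
      rw [← hQ0]
      conv_rhs => rw [← Polynomial.eraseLead_add_monomial_natDegree_leadingCoeff Q]
      rw [Polynomial.eval₂_add, Polynomial.eval₂_monomial, hQdeg]
    set alc := algebraMap (Polynomial ℚ) (RatFunc ℚ) Q.leadingCoeff with halcdef
    have halc : alc ≠ 0 := RatFunc.algebraMap_ne_zero hlcne
    have h2 : ι (Polynomial.eval₂ Polynomial.coeToPowerSeries.ringHom f Q.eraseLead)
        + lft alc * F ^ n = 0 := by
      have h3 := congrArg ι h1
      rw [map_add, map_zero, map_mul, map_pow] at h3
      rw [Polynomial.coeToPowerSeries.ringHom_apply] at h3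
      rw [halcdef, lft_alg]
      exact h3
    have h4 : lft alc * F ^ n
        = - ι (Polynomial.eval₂ Polynomial.coeToPowerSeries.ringHom f Q.eraseLead) := by
      linear_combination h2
    have h5 : F ^ n = alc⁻¹ •
        (- ι (Polynomial.eval₂ Polynomial.coeToPowerSeries.ringHom f Q.eraseLead)) := by
      rw [smul_def, ← h4, ← mul_assoc, ← map_mul, inv_mul_cancel₀ halc, map_one, one_mul]
    rw [h5]
    exact Submodule.smul_mem _ _ (Submodule.neg_mem _ (hmemlt _ hE))
  -- multiplicative closure
  have hmulF : ∀ x ∈ W, F * x ∈ W := by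
    intro x hx
    induction hx using Submodule.span_induction with
    | mem x hxs =>
        obtain ⟨i, rfl⟩ := hxs
        rw [← pow_succ']
        rcases Nat.lt_or_ge ((i : ℕ) + 1) n with h | h
        · exact hFi _ h
        · have : (i : ℕ) + 1 = n := by omega
          rw [this]; exact hFn
    | zero => rw [mul_zero]; exact W.zero_mem
    | add x y hx hy ihx ihy => rw [mul_add]; exact W.add_mem ihx ihy
    | smul c x hx ihx => rw [mul_smul_comm]; exact W.smul_mem _ ihx
  have hFpow : ∀ i : ℕ, F ^ i ∈ W := by
    intro i
    induction i with
    | zero => simpa using hone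
    | succ k ih => rw [pow_succ']; exact hmulF _ ih
  have hmemAll : ∀ R : Polynomial (Polynomial ℚ),
      ι (Polynomial.eval₂ Polynomial.coeToPowerSeries.ringHom f R) ∈ W := by
    intro R
    rw [hιeval]
    exact Submodule.sum_mem _ fun i _ => Submodule.smul_mem _ _ (hFpow i)
  have hWmul : ∀ x ∈ W, ∀ y ∈ W, x * y ∈ W := by
    have hpow : ∀ (i : ℕ), ∀ y ∈ W, F ^ i * y ∈ W := by
      intro i
      induction i with
      | zero => intro y hy; simpa using hy
      | succ k ih =>
          intro y hy
          rw [pow_succ', mul_assoc]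
          exact hmulF _ (ih y hy)
    intro x hx y hy
    induction hx using Submodule.span_induction with
    | mem x hxs => obtain ⟨i, rfl⟩ := hxs; exact hpow _ y hy
    | zero => rw [zero_mul]; exact W.zero_mem
    | add u v hu hv ihu ihv => rw [add_mul]; exact W.add_mem ihu ihv
    | smul c u hu ihu => rw [smul_mul_assoc]; exact W.smul_mem _ ihu
  haveI hfin : FiniteDimensional (RatFunc ℚ) W :=
    FiniteDimensional.span_of_finite _ (Set.finite_range _)
  have hinv : ∀ x ∈ W, x ≠ 0 → x⁻¹ ∈ W := by
    intro x hx hx0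
    let φ : W →ₗ[RatFunc ℚ] W :=
      { toFun := fun w => ⟨x * (w : K), hWmul x hx _ w.2⟩
        map_add' := fun u v => by
          ext
          show x * ((u : K) + (v : K)) = x * (u : K) + x * (v : K)
          ring
        map_smul' := fun c u => by
          ext
          show x * (c • (u : K)) = c • (x * (u : K))
          rw [smul_def, smul_def]
          ring }
    have hφinj : Function.Injective φ := by
      intro u v huv
      have h1 : x * (u : K) = x * (v : K) := congrArg Subtype.val huv
      ext
      exact mul_left_cancel₀ hx0 h1
    obtain ⟨w, hw⟩ := (LinearMap.injective_iff_surjective (f := φ)).mp hφinj ⟨1, hone⟩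
    have hxw : x * (w : K) = 1 := congrArg Subtype.val hw
    have h2 : x⁻¹ = (w : K) := inv_eq_of_mul_eq_one_right hxw
    rw [h2]
    exact w.2
  -- the differentiated relation
  set ρ : Polynomial ℚ →+* PowerSeries ℚ := Polynomial.coeToPowerSeries.ringHom with hρ
  set Q' : Polynomial (PowerSeries ℚ) := Q.map ρ with hQ'def
  have hQ'eval : Polynomial.eval f Q' = 0 := by rw [hQ'def, Polynomial.eval_map]; exact hQ0
  have hkey := Derivation.apply_eval_eq (PowerSeries.derivative ℚ) f Q'
  rw [hQ'eval, map_zero] at hkey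
  have hQy : Polynomial.derivative Q ≠ 0 := by
    intro h
    have := Polynomial.natDegree_eq_zero_of_derivative_eq_zero h
    omega
  have hBeq : Polynomial.eval f (Polynomial.derivative Q')
      = Polynomial.eval₂ ρ f (Polynomial.derivative Q) := by
    rw [hQ'def, Polynomial.derivative_map, Polynomial.eval_map]
  have hB : Polynomial.eval₂ ρ f (Polynomial.derivative Q) ≠ 0 := by
    intro h
    have h1 := hQmin _ hQy h
    have h2 : (Polynomial.derivative Q).natDegree < n := by
      rw [← hQdeg]
      exact Polynomial.natDegree_derivative_lt (by omega)
    omega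
  -- membership of the coefficient-derivative part
  have hA1 : ι (PolynomialModule.eval f ((PowerSeries.derivative ℚ).mapCoeffs Q')) ∈ W := by
    set v := (PowerSeries.derivative ℚ).mapCoeffs Q' with hv
    change ι (v.coeff.sum fun i m => f ^ i • m) ∈ W
    rw [Finsupp.sum, map_sum]
    refine Submodule.sum_mem _ fun i _ => ?_
    have hvi : v.coeff i = ((Polynomial.derivative (Q.coeff i) : Polynomial ℚ) : PowerSeries ℚ) := by
      rw [hv, Derivation.mapCoeffs_apply, hQ'def, Polynomial.coeff_map]
      show (ρ (Q.coeff i)).derivativeFun = _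
      rw [Polynomial.coeToPowerSeries.ringHom_apply]
      exact PowerSeries.derivative_coe (Q.coeff i)
    rw [smul_eq_mul, map_mul, map_pow, hvi, mul_comm, ← lft_alg, ← smul_def]
    exact Submodule.smul_mem _ _ (hFpow i)
  have hDF : ι f.derivativeFun ∈ W := by
    have h1 : ι (Polynomial.eval₂ ρ f (Polynomial.derivative Q)) * ι f.derivativeFun
        = - ι (PolynomialModule.eval f ((PowerSeries.derivative ℚ).mapCoeffs Q')) := by
      rw [← map_mul, ← map_neg]
      congr 1
      have h2 : (PowerSeries.derivative ℚ) f = f.derivativeFun := rfl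
      rw [hBeq, h2, smul_eq_mul] at hkey
      linear_combination -hkey
    have hιB : ι (Polynomial.eval₂ ρ f (Polynomial.derivative Q)) ≠ 0 := ι_ne hB
    have h3 : ι f.derivativeFun
        = (ι (Polynomial.eval₂ ρ f (Polynomial.derivative Q)))⁻¹ *
          (- ι (PolynomialModule.eval f ((PowerSeries.derivative ℚ).mapCoeffs Q'))) := by
      rw [← h1]
      field_simp
    rw [h3]
    exact hWmul _ (hinv _ (hmemAll _) hιB) _ (Submodule.neg_mem _ hA1)
  -- derivative closure of W
  have hDW : ∀ x, x ∈ W → D x ∈ W := by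
    intro x hx
    induction hx using Submodule.span_induction with
    | mem x hxs =>
        obtain ⟨i, rfl⟩ := hxs
        show D (F ^ (i : ℕ)) ∈ W
        rcases Nat.eq_zero_or_pos (i : ℕ) with h | h
        · rw [h, pow_zero, D_one]; exact W.zero_mem
        · obtain ⟨m, hm⟩ : ∃ m, (i : ℕ) = m + 1 := ⟨(i : ℕ) - 1, by omega⟩
          rw [hm, D_pow]
          have hDFι : D F = ι f.derivativeFun := D_ι f
          have h2 : F ^ m * D F ∈ W := hWmul _ (hFpow m) _ (by rw [hDFι]; exact hDF)
          have h3 : ((m + 1 : ℕ) : RatFunc ℚ) • (F ^ m * D F) ∈ W := W.smul_mem _ h2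
          rw [smul_def, map_natCast] at h3
          rw [mul_assoc]
          push_cast at h3 ⊢
          exact h3
    | zero => rw [D_zero]; exact W.zero_mem
    | add x y hx hy ihx ihy => rw [D_add]; exact W.add_mem ihx ihy
    | smul c x hx ihx =>
        obtain ⟨c₂, hc₂⟩ := D_lft c
        rw [smul_def, D_mul, hc₂, ← smul_def, ← smul_def]
        exact W.add_mem (W.smul_mem _ hx) (W.smul_mem _ ihx)
  -- all derivatives lie in W
  have hvecs : ∀ m : ℕ, ι ((PowerSeries.derivativeFun)^[m] f) ∈ W := by
    intro m
    induction m with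
    | zero => simpa using hFpow 1
    | succ k ih =>
        rw [Function.iterate_succ_apply', ← D_ι]
        exact hDW _ ih
  -- linear dependence
  have hndep : ¬ LinearIndependent (RatFunc ℚ)
      (fun k : Fin (n + 1) => ι ((PowerSeries.derivativeFun)^[(k : ℕ)] f)) := by
    intro hind
    let v : Fin (n + 1) → W := fun k => ⟨_, hvecs (k : ℕ)⟩
    have hvind : LinearIndependent (RatFunc ℚ) v :=
      LinearIndependent.of_comp W.subtype hind
    have hcard := hvind.fintype_card_le_finrank
    have hle := finrank_span_le_card (R := RatFunc ℚ)
      (Set.range fun i : Fin n => F ^ (i : ℕ))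
    have hc2 : (Set.range fun i : Fin n => F ^ (i : ℕ)).toFinset.card ≤ n := by
      rw [Set.toFinset_card]
      simpa using Fintype.card_range_le (fun i : Fin n => F ^ (i : ℕ))
    rw [Fintype.card_fin] at hcard
    rw [← hWdef] at hle
    omega
  obtain ⟨cc, hccsum, k0, hk0⟩ := Fintype.not_linearIndependent_iff.mp hndep
  obtain ⟨b, hb⟩ := IsLocalization.exist_integer_multiples_of_finite
    (nonZeroDivisors (Polynomial ℚ)) cc
  have hb' : ∀ i : Fin (n + 1), ∃ y : Polynomial ℚ,
      algebraMap (Polynomial ℚ) (RatFunc ℚ) y = (b : Polynomial ℚ) • cc i := fun i => hb i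
  choose pc hpc using hb'
  have hbne : algebraMap (Polynomial ℚ) (RatFunc ℚ) (b : Polynomial ℚ) ≠ 0 :=
    RatFunc.algebraMap_ne_zero (nonZeroDivisors.coe_ne_zero b)
  refine ⟨n, pc, ⟨k0, ?_⟩, ?_⟩
  · intro h0
    apply hk0
    have h1 := hpc k0
    rw [h0, map_zero] at h1
    have h2 : algebraMap (Polynomial ℚ) (RatFunc ℚ) (b : Polynomial ℚ) * cc k0 = 0 := by
      rw [← Algebra.smul_def, ← h1]
    exact (mul_eq_zero.mp h2).resolve_left hbne
  · apply ι_inj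
    rw [map_sum, map_zero]
    have hterm : ∀ j : Fin (n + 1),
        ι ((pc j : PowerSeries ℚ) * (PowerSeries.derivativeFun)^[(j : ℕ)] f)
          = algebraMap (Polynomial ℚ) (RatFunc ℚ) (b : Polynomial ℚ) •
            (cc j • ι ((PowerSeries.derivativeFun)^[(j : ℕ)] f)) := by
      intro j
      rw [map_mul, ← lft_alg, hpc j]
      simp only [Algebra.smul_def, AlgHolAux.algebraMap_eq, map_mul, mul_assoc]
    rw [Finset.sum_congr rfl (fun j _ => hterm j), ← Finset.smul_sum, hccsum, smul_zero]
end
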